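/- Consider the two-sorted term language defined mutually by: sequence terms S ::= a variable (from a type V) | ε | unit(e) | update(S, N, e) | con(S₁, …, Sₙ) with n ≥ 0 (elements e from a type E, and N an integer term), and integer terms N ::= an integer literal | len(S) | N + N | −N. Define the one-step rewrite relation generated, closed under arbitrary subterm contexts, by the rules: len(ε) → 0; len(unit(e)) → 1; len(update(s, i, e)) → len(s); len(con(s₁, …, sₙ)) → len(s₁) + … + len(sₙ); con(u₁,…, ε, …, uₘ) → the same concatenation with that ε removed; and con(u₁, …, con(s₁, …, sₙ), …, uₘ) → the flattened concatenation con(u₁, …, s₁, …, sₙ, …, uₘ). Then this one-step rewrite relation is well-founded, i.e., there is no infinite rewrite sequence. -/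
import Mathlib


mutual
  /-- Sequence terms: variables, the empty sequence, unit, update, and
  variadic concatenation (with `n ≥ 0` arguments). -/
  inductive SeqTerm (V E : Type) : Type where
    | var : V → SeqTerm V E
    | empty : SeqTerm V E
    | unit : E → SeqTerm V E
    | update : SeqTerm V E → IntTerm V E → E → SeqTerm V E
    | con : List (SeqTerm V E) → SeqTerm V E

  /-- Integer terms: integer literals, length of a sequence term, addition, negation. -/
  inductive IntTerm (V E : Type) : Type where
    | lit : ℤ → IntTerm V E
    | len : SeqTerm V E → IntTerm V E
    | add : IntTerm V E → IntTerm V E → IntTerm V E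
    | neg : IntTerm V E → IntTerm V E
end

/-- The sum `len s₁ + … + len sₙ` of the lengths of a list of sequence terms. -/
def sumLens {V E : Type} : List (SeqTerm V E) → IntTerm V E
  | [] => .lit 0
  | [s] => .len s
  | s :: rest => .add (.len s) (sumLens rest)

mutual
  /-- One-step rewriting on sequence terms: removing an empty component of a
  concatenation, flattening a nested concatenation, and closure under all
  sequence-term contexts. -/
  inductive SeqStep {V E : Type} : SeqTerm V E → SeqTerm V E → Prop where
    | conEmpty (a b : List (SeqTerm V E)) :
        SeqStep (.con (a ++ .empty :: b)) (.con (a ++ b))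
    | conFlatten (a : List (SeqTerm V E)) (L : List (SeqTerm V E))
        (b : List (SeqTerm V E)) :
        SeqStep (.con (a ++ .con L :: b)) (.con (a ++ (L ++ b)))
    | updateSeq {s s' : SeqTerm V E} (i : IntTerm V E) (e : E) :
        SeqStep s s' → SeqStep (.update s i e) (.update s' i e)
    | updateInt {i i' : IntTerm V E} (s : SeqTerm V E) (e : E) :
        IntStep i i' → SeqStep (.update s i e) (.update s i' e)
    | conArg {s s' : SeqTerm V E} (a b : List (SeqTerm V E)) :
        SeqStep s s' → SeqStep (.con (a ++ s :: b)) (.con (a ++ s' :: b))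

  /-- One-step rewriting on integer terms: the four `len` rules and closure
  under all integer-term contexts. -/
  inductive IntStep {V E : Type} : IntTerm V E → IntTerm V E → Prop where
    | lenEmpty : IntStep (.len (.empty : SeqTerm V E)) (.lit 0)
    | lenUnit (e : E) : IntStep (.len (.unit e : SeqTerm V E)) (.lit 1)
    | lenUpdate (s : SeqTerm V E) (i : IntTerm V E) (e : E) :
        IntStep (.len (.update s i e)) (.len s)
    | lenCon (L : List (SeqTerm V E)) : IntStep (.len (.con L)) (sumLens L)
    | lenArg {s s' : SeqTerm V E} : SeqStep s s' → IntStep (.len s) (.len s')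
    | addL {i i' : IntTerm V E} (j : IntTerm V E) :
        IntStep i i' → IntStep (.add i j) (.add i' j)
    | addR {j j' : IntTerm V E} (i : IntTerm V E) :
        IntStep j j' → IntStep (.add i j) (.add i j')
    | negArg {i i' : IntTerm V E} : IntStep i i' → IntStep (.neg i) (.neg i')
end

mutual
  def mu {V E : Type} : SeqTerm V E → ℕ
    | .var _ => 1
    | .empty => 1
    | .unit _ => 1
    | .update s i _ => mu s + nu i + 1
    | .con L => 2 * muList L + 1

  def muList {V E : Type} : List (SeqTerm V E) → ℕ
    | [] => 0
    | s :: rest => mu s + muList rest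

  def nu {V E : Type} : IntTerm V E → ℕ
    | .lit _ => 0
    | .len s => mu s
    | .add i j => nu i + nu j + 1
    | .neg i => nu i + 1
end

theorem mu_pos {V E : Type} (s : SeqTerm V E) : 1 ≤ mu s := by
  cases s <;> simp [mu] <;> omega

theorem muList_append {V E : Type} (a b : List (SeqTerm V E)) :
    muList (a ++ b) = muList a + muList b := by
  induction a with
  | nil => simp [muList]
  | cons s rest ih => simp [muList, ih]; omega

theorem nu_sumLens {V E : Type} (L : List (SeqTerm V E)) :
    nu (sumLens L) < 2 * muList L + 1 := by
  induction L with
  | nil => simp [sumLens, nu, muList]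
  | cons s rest ih =>
    cases rest with
    | nil =>
      simp [sumLens, nu, muList]
      have := mu_pos s; omega
    | cons t r =>
      have h1 : sumLens (s :: t :: r) = .add (.len s) (sumLens (t :: r)) := rfl
      have h2 : muList (s :: t :: r) = mu s + muList (t :: r) := rfl
      rw [h1, h2]
      simp only [nu]
      have := mu_pos s
      omega

theorem seq_dec {V E : Type} {s t : SeqTerm V E} (h : SeqStep s t) : mu t < mu s := by
  refine SeqStep.rec (motive_1 := fun s t _ => mu t < mu s)
    (motive_2 := fun i j _ => nu j < nu i)
    ?_ ?_ ?_ ?_ ?_ ?_ ?_ ?_ ?_ ?_ ?_ ?_ ?_ h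
  · intro a b
    simp only [mu, muList_append, muList]
    have := mu_pos (V := V) (E := E) .empty
    omega
  · intro a L b
    simp only [mu, muList_append, muList]
    omega
  · intro s s' i e _ ih
    simp only [mu]; omega
  · intro i i' s e _ ih
    simp only [mu]; omega
  · intro s s' a b _ ih
    simp only [mu, muList_append, muList]; omega
  · simp [nu, mu]
  · intro e; simp [nu, mu]
  · intro s i e; simp only [nu, mu]; omega
  · intro L
    have := nu_sumLens L
    simp only [nu, mu]; omega
  · intro s s' _ ih
    simp only [nu]; omega
  · intro i i' j _ ih
    simp only [nu]; omega
  · intro j j' i _ ih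
    simp only [nu]; omega
  · intro i i' _ ih
    simp only [nu]; omega

theorem int_dec {V E : Type} {i j : IntTerm V E} (h : IntStep i j) : nu j < nu i := by
  refine IntStep.rec (motive_1 := fun s t _ => mu t < mu s)
    (motive_2 := fun i j _ => nu j < nu i)
    ?_ ?_ ?_ ?_ ?_ ?_ ?_ ?_ ?_ ?_ ?_ ?_ ?_ h
  · intro a b
    simp only [mu, muList_append, muList]
    have := mu_pos (V := V) (E := E) .empty
    omega
  · intro a L b
    simp only [mu, muList_append, muList]
    omega
  · intro s s' i e _ ih
    simp only [mu]; omega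
  · intro i i' s e _ ih
    simp only [mu]; omega
  · intro s s' a b _ ih
    simp only [mu, muList_append, muList]; omega
  · simp [nu, mu]
  · intro e; simp [nu, mu]
  · intro s i e; simp only [nu, mu]; omega
  · intro L
    have := nu_sumLens L
    simp only [nu, mu]; omega
  · intro s s' _ ih
    simp only [nu]; omega
  · intro i i' j _ ih
    simp only [nu]; omega
  · intro j j' i _ ih
    simp only [nu]; omega
  · intro i i' _ ih
    simp only [nu]; omega

theorem no_inf_desc {α : Type} (m : α → ℕ) (f : ℕ → α)
    (h : ∀ n, m (f (n + 1)) < m (f n)) : False := by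
  have key : ∀ n, m (f n) + n ≤ m (f 0) := by
    intro n
    induction n with
    | zero => omega
    | succ k ih => have := h k; omega
  have := key (m (f 0) + 1)
  omega

/-- The one-step rewrite relation is terminating: there is no infinite rewrite
sequence of sequence terms nor of integer terms. -/
theorem stmt_14 {V E : Type} :
    (¬ ∃ f : ℕ → SeqTerm V E, ∀ n, SeqStep (f n) (f (n + 1))) ∧
    (¬ ∃ g : ℕ → IntTerm V E, ∀ n, IntStep (g n) (g (n + 1))) := by
  constructor
  · rintro ⟨f, hf⟩
    exact no_inf_desc mu f (fun n => seq_dec (hf n))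
  · rintro ⟨g, hg⟩
    exact no_inf_desc nu g (fun n => int_dec (hg n))
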